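/- Let h, h' : X → ℝ^d be functions and let w_t, w_t' ∈ ℝ^d be weight vectors for tasks t = 1,...,N. Suppose for all tasks t and all inputs x, ⟨h'(x), w_t'⟩ = ⟨h(x), w_t⟩. Assume the image of h spans ℝ^d and there exist d tasks t_1,...,t_d such that {w_{t_i}} are linearly independent. Then there exists an invertible matrix A ∈ ℝ^{d×d} such that h'(x) = A h(x) for all x. -/

import Mathlib

open Matrix

/-- Multi-task linear identifiability: if two feature extractors with task-specific
linear heads give identical predictions on all tasks and inputs, the image of `h`
spans `ℝ^d`, and some `d` tasks have linearly independent ground-truth weights,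
then `h'` is an invertible linear transformation of `h`. -/
theorem multitask_linear_identifiability
    {X : Type*} {d N : ℕ}
    (h h' : X → (Fin d → ℝ)) (w w' : Fin N → (Fin d → ℝ))
    (hpred : ∀ (t : Fin N) (x : X), w' t ⬝ᵥ h' x = w t ⬝ᵥ h x)
    (hspan : Submodule.span ℝ (Set.range h) = ⊤)
    (hindep : ∃ ts : Fin d → Fin N, LinearIndependent ℝ (fun i => w (ts i))) :
    ∃ A : Matrix (Fin d) (Fin d) ℝ, IsUnit A ∧ ∀ x, h' x = A.mulVec (h x) := by
  obtain ⟨ts, hli⟩ := hindep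
  set W : Matrix (Fin d) (Fin d) ℝ := Matrix.of (fun i => w (ts i)) with hWdef
  set W' : Matrix (Fin d) (Fin d) ℝ := Matrix.of (fun i => w' (ts i)) with hW'def
  have hWunit : IsUnit W := Matrix.linearIndependent_rows_iff_isUnit.mp hli
  have key : ∀ x, W'.mulVec (h' x) = W.mulVec (h x) := by
    intro x
    funext i
    simpa [Matrix.mulVec, dotProduct, hWdef, hW'def] using hpred (ts i) x
  have hW'unit : IsUnit W' := by
    rw [Matrix.isUnit_iff_isUnit_det, isUnit_iff_ne_zero]
    intro hdet
    obtain ⟨v, hv, hvW'⟩ := Matrix.exists_vecMul_eq_zero_iff.mpr hdet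
    set u : Fin d → ℝ := v ᵥ* W with hu
    have hzero : ∀ y : Fin d → ℝ, u ⬝ᵥ y = 0 := by
      let f : (Fin d → ℝ) →ₗ[ℝ] ℝ :=
        { toFun := fun y => u ⬝ᵥ y
          map_add' := fun a b => dotProduct_add u a b
          map_smul' := fun c a => by simp [dotProduct_smul] }
      have hf : ∀ y ∈ Submodule.span ℝ (Set.range h), f y = 0 := by
        intro y hy
        refine Submodule.span_induction ?_ ?_ ?_ ?_ hy
        · rintro _ ⟨x, rfl⟩
          show u ⬝ᵥ h x = 0
          calc u ⬝ᵥ h x = v ⬝ᵥ W.mulVec (h x) := by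
                rw [hu, dotProduct_mulVec]
            _ = v ⬝ᵥ W'.mulVec (h' x) := by rw [key]
            _ = (v ᵥ* W') ⬝ᵥ h' x := by rw [dotProduct_mulVec]
            _ = 0 := by rw [hvW']; simp
        · simp
        · intro a b _ _ ha hb; simp [map_add, ha, hb]
        · intro c a _ ha; simp [_root_.map_smul, ha]
      intro y
      exact hf y (hspan ▸ Submodule.mem_top)
    have hu0 : u = 0 := by
      funext i
      have := hzero (Pi.single i 1)
      simpa [dotProduct_single] using this
    have : v = 0 := by
      have := congrArg (fun z => z ᵥ* (W⁻¹)) hu0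
      rw [vecMul_vecMul, Matrix.mul_nonsing_inv W
        ((Matrix.isUnit_iff_isUnit_det _).mp hWunit), vecMul_one] at this
      simpa using this
    exact hv this
  refine ⟨W'⁻¹ * W, (isUnit_nonsing_inv_iff.mpr hW'unit).mul hWunit, fun x => ?_⟩
  rw [← Matrix.mulVec_mulVec, ← key, Matrix.mulVec_mulVec,
    Matrix.nonsing_inv_mul W' ((Matrix.isUnit_iff_isUnit_det _).mp hW'unit), Matrix.one_mulVec]
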